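/- Let S be a semigroup, λ a nonzero cardinal and n a positive integer with n ≤ λ. For every positive integer i ≤ n, a nonzero element of 𝓘_λ^n(S) given by the partial injective map a₁,…,a_i ↦ b₁,…,b_i with S-values s₁,…,s_i is a regular element of 𝓘_λ^n(S) (i.e. x = x·y·x for some y) if and only if s₁,…,s_i are regular elements of S. -/
import Mathlib


open Classical

namespace ISemExt

/-- Carrier for the extension `𝓘_λ^n(S)`: an element is a function assigning to each
pair `(x,y)` of points of `lam` an optional value in `S` (its labelled graph). -/
def Elem (lam S : Type) : Type := lam → lam → Option S

/-- The zero element (the empty map). -/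
def zeroE (lam S : Type) : Elem lam S := fun _ _ => none

/-- Multiplication in `𝓘_λ^n(S)`: composition of labelled partial maps,
multiplying the labels along composable pairs. -/
noncomputable def mulE {lam S : Type} [Mul S] (f g : Elem lam S) : Elem lam S :=
  fun x z =>
    if h : ∃ y s t, f x y = some s ∧ g y z = some t then
      some (h.choose_spec.choose * h.choose_spec.choose_spec.choose)
    else none

/-- The graph of an element. -/
def graphOf {lam S : Type} (f : Elem lam S) : Set (lam × lam) :=
  {p | (f p.1 p.2).isSome}

/-- `Valid n f` says that `f` is an element of `𝓘_λ^n(S)`: it is a partial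
injective labelled map (in both directions) of rank at most `n`. -/
def Valid {lam S : Type} (n : ℕ) (f : Elem lam S) : Prop :=
  (∀ ⦃x y₁ y₂⦄, (f x y₁).isSome → (f x y₂).isSome → y₁ = y₂) ∧
  (∀ ⦃x₁ x₂ y⦄, (f x₁ y).isSome → (f x₂ y).isSome → x₁ = x₂) ∧
  (graphOf f).Finite ∧ (graphOf f).ncard ≤ n

/-- The element with rows `(a₁,…,a_i)`, `(s₁,…,s_i)`, `(b₁,…,b_i)`. -/
noncomputable def mk3 {lam S : Type} {i : ℕ} (a : Fin i → lam) (s : Fin i → S)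
    (b : Fin i → lam) : Elem lam S :=
  fun x y => if h : ∃ j, a j = x ∧ b j = y then some (s h.choose) else none


section Aux
variable {lam S : Type}

theorem mk3_eq_some {i : ℕ} {a : Fin i → lam} {s : Fin i → S} {b : Fin i → lam}
    {x y : lam} {v : S} (h : mk3 a s b x y = some v) :
    ∃ j, a j = x ∧ b j = y ∧ v = s j := by
  unfold mk3 at h
  split_ifs at h with hh
  exact ⟨hh.choose, hh.choose_spec.1, hh.choose_spec.2, (Option.some.inj h).symm⟩

theorem mk3_some {i : ℕ} {a : Fin i → lam} {s : Fin i → S} {b : Fin i → lam}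
    (ha : Function.Injective a) (j : Fin i) :
    mk3 a s b (a j) (b j) = some (s j) := by
  have h : ∃ k, a k = a j ∧ b k = b j := ⟨j, rfl, rfl⟩
  unfold mk3
  rw [dif_pos h, ha h.choose_spec.1]

theorem mulE_eq_some [Mul S] {f g : Elem lam S} {x z : lam} {w : S}
    (h : mulE f g x z = some w) :
    ∃ y u v, f x y = some u ∧ g y z = some v ∧ w = u * v := by
  unfold mulE at h
  split_ifs at h with hh
  exact ⟨hh.choose, hh.choose_spec.choose, hh.choose_spec.choose_spec.choose,
    hh.choose_spec.choose_spec.choose_spec.1,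
    hh.choose_spec.choose_spec.choose_spec.2, (Option.some.inj h).symm⟩

theorem mulE_some [Mul S] {f g : Elem lam S}
    (hf : ∀ ⦃x y₁ y₂⦄, (f x y₁).isSome → (f x y₂).isSome → y₁ = y₂)
    {x y z : lam} {u v : S} (h1 : f x y = some u) (h2 : g y z = some v) :
    mulE f g x z = some (u * v) := by
  have h : ∃ y s t, f x y = some s ∧ g y z = some t := ⟨y, u, v, h1, h2⟩
  have hs : (mulE f g x z).isSome := by unfold mulE; rw [dif_pos h]; rfl
  obtain ⟨w, hw⟩ := Option.isSome_iff_exists.mp hs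
  obtain ⟨y', u', v', hy1, hy2, hy3⟩ := mulE_eq_some hw
  have hyy : y' = y := hf (by rw [hy1]; rfl) (by rw [h1]; rfl)
  subst hyy
  rw [h1] at hy1
  rw [h2] at hy2
  rw [hw, hy3, Option.some.inj hy1, Option.some.inj hy2]

theorem mk3_functional {i : ℕ} {a : Fin i → lam} {s : Fin i → S} {b : Fin i → lam}
    (ha : Function.Injective a) :
    ∀ ⦃x y₁ y₂⦄, (mk3 a s b x y₁).isSome → (mk3 a s b x y₂).isSome → y₁ = y₂ := by
  intro x y₁ y₂ h1 h2
  obtain ⟨v₁, hv₁⟩ := Option.isSome_iff_exists.mp h1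
  obtain ⟨v₂, hv₂⟩ := Option.isSome_iff_exists.mp h2
  obtain ⟨j, hj1, hj2, _⟩ := mk3_eq_some hv₁
  obtain ⟨k, hk1, hk2, _⟩ := mk3_eq_some hv₂
  have : j = k := ha (hj1.trans hk1.symm)
  rw [← hj2, ← hk2, this]

theorem mulE_functional [Mul S] {f g : Elem lam S}
    (hf : ∀ ⦃x y₁ y₂⦄, (f x y₁).isSome → (f x y₂).isSome → y₁ = y₂)
    (hg : ∀ ⦃x y₁ y₂⦄, (g x y₁).isSome → (g x y₂).isSome → y₁ = y₂) :
    ∀ ⦃x y₁ y₂⦄, (mulE f g x y₁).isSome → (mulE f g x y₂).isSome → y₁ = y₂ := by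
  intro x y₁ y₂ h1 h2
  obtain ⟨w₁, hw₁⟩ := Option.isSome_iff_exists.mp h1
  obtain ⟨w₂, hw₂⟩ := Option.isSome_iff_exists.mp h2
  obtain ⟨p₁, u₁, v₁, hp₁, hq₁, _⟩ := mulE_eq_some hw₁
  obtain ⟨p₂, u₂, v₂, hp₂, hq₂, _⟩ := mulE_eq_some hw₂
  have hp : p₁ = p₂ := hf (by rw [hp₁]; rfl) (by rw [hp₂]; rfl)
  rw [hp] at hq₁
  exact hg (by rw [hq₁]; rfl) (by rw [hq₂]; rfl)

end Aux

/-- A nonzero element of `𝓘_λ^n(S)` with rows `(a₁,…,a_i)`, `(s₁,…,s_i)`, `(b₁,…,b_i)`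
is regular in `𝓘_λ^n(S)` if and only if `s₁,…,s_i` are regular elements of `S`. -/
theorem regular_element_iff (lam S : Type) [Nonempty lam] [Semigroup S]
    (n i : ℕ) (hn : 0 < n) (hcard : (n : Cardinal) ≤ Cardinal.mk lam)
    (hi : 0 < i) (hin : i ≤ n)
    (a b : Fin i → lam) (s : Fin i → S)
    (ha : Function.Injective a) (hb : Function.Injective b) :
    (∃ g : Elem lam S, Valid n g ∧
        mk3 a s b = mulE (mulE (mk3 a s b) g) (mk3 a s b)) ↔
      (∀ j, ∃ t : S, s j = s j * t * s j) := by
  constructor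
  · rintro ⟨g, _, heq⟩ j
    have hfj : mulE (mulE (mk3 a s b) g) (mk3 a s b) (a j) (b j) = some (s j) := by
      rw [← heq]; exact mk3_some ha j
    obtain ⟨y, u, v, h1, h2, h3⟩ := mulE_eq_some hfj
    obtain ⟨k, hk1, hk2, hk3⟩ := mk3_eq_some h2
    have hkj : k = j := hb hk2
    obtain ⟨z, u₁, u₂, hz1, hz2, hz3⟩ := mulE_eq_some h1
    obtain ⟨m, hm1, hm2, hm3⟩ := mk3_eq_some hz1
    have hmj : m = j := ha hm1
    refine ⟨u₂, ?_⟩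
    rw [hkj] at hk3
    rw [hmj] at hm3
    calc s j = u * v := h3
      _ = s j * u₂ * s j := by rw [hz3, hm3, hk3]
  · intro h
    choose t ht using h
    refine ⟨mk3 b t a, ⟨mk3_functional hb, ?_, ?_, ?_⟩, ?_⟩
    · intro x₁ x₂ y h1 h2
      obtain ⟨v₁, hv₁⟩ := Option.isSome_iff_exists.mp h1
      obtain ⟨v₂, hv₂⟩ := Option.isSome_iff_exists.mp h2
      obtain ⟨j, hj1, hj2, _⟩ := mk3_eq_some hv₁
      obtain ⟨k, hk1, hk2, _⟩ := mk3_eq_some hv₂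
      have : j = k := ha (hj2.trans hk2.symm)
      rw [← hj1, ← hk1, this]
    · have hsub : graphOf (mk3 b t a) ⊆ Set.range (fun j : Fin i => ((b j : lam), a j)) := by
        rintro ⟨x, y⟩ hp
        obtain ⟨v, hv⟩ := Option.isSome_iff_exists.mp hp
        obtain ⟨j, hj1, hj2, _⟩ := mk3_eq_some hv
        exact ⟨j, by simp [hj1, hj2]⟩
      exact (Set.finite_range _).subset hsub
    · have hsub : graphOf (mk3 b t a) ⊆ Set.range (fun j : Fin i => ((b j : lam), a j)) := by
        rintro ⟨x, y⟩ hp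
        obtain ⟨v, hv⟩ := Option.isSome_iff_exists.mp hp
        obtain ⟨j, hj1, hj2, _⟩ := mk3_eq_some hv
        exact ⟨j, by simp [hj1, hj2]⟩
      have h1 : (graphOf (mk3 b t a)).ncard
          ≤ (Set.range fun j : Fin i => ((b j : lam), a j)).ncard :=
        Set.ncard_le_ncard hsub (Set.finite_range _)
      have h2 : (Set.range fun j : Fin i => ((b j : lam), a j)).ncard ≤ i := by
        rw [← Set.image_univ]
        calc (( fun j : Fin i => ((b j : lam), a j)) '' Set.univ).ncard
            ≤ (Set.univ : Set (Fin i)).ncard := Set.ncard_image_le Set.finite_univ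
          _ = i := by simp [Set.ncard_univ]
      exact le_trans h1 (le_trans h2 hin)
    · funext x z
      by_cases hx : ∃ k, a k = x ∧ b k = z
      · obtain ⟨k, hk1, hk2⟩ := hx
        subst hk1; subst hk2
        have e1 : mk3 a s b (a k) (b k) = some (s k) := mk3_some ha k
        have e2 : mk3 b t a (b k) (a k) = some (t k) := mk3_some hb k
        have e3 : mulE (mk3 a s b) (mk3 b t a) (a k) (a k) = some (s k * t k) :=
          mulE_some (mk3_functional ha) e1 e2
        have e4 : mulE (mulE (mk3 a s b) (mk3 b t a)) (mk3 a s b) (a k) (b k)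
            = some (s k * t k * s k) :=
          mulE_some (mulE_functional (mk3_functional ha) (mk3_functional hb)) e3 e1
        rw [e1, e4, ← ht k]
      · have lhs : mk3 a s b x z = none := by unfold mk3; exact dif_neg hx
        rw [lhs]
        cases hE : mulE (mulE (mk3 a s b) (mk3 b t a)) (mk3 a s b) x z with
        | none => rfl
        | some w =>
          exfalso
          obtain ⟨y, u, v, h1, h2, _⟩ := mulE_eq_some hE
          obtain ⟨k, hk1, hk2, _⟩ := mk3_eq_some h2
          obtain ⟨y', u₁, u₂, hy1, hy2, _⟩ := mulE_eq_some h1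
          obtain ⟨m, hm1, hm2, _⟩ := mk3_eq_some hy1
          obtain ⟨p, hp1, hp2, _⟩ := mk3_eq_some hy2
          have hmp : m = p := hb (hm2.trans hp1.symm)
          subst hmp
          have hkm : k = m := ha (hk1.trans hp2.symm)
          subst hkm
          exact hx ⟨k, hm1, hk2⟩

end ISemExt
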